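/- arXiv:1210.4577 — 2 statements merged into one kernel-verified Lean document; each statement's English description precedes it below -/
import Mathlib

section
/- Suppose a graph G' on vertex set [n] is obtained from a graph G on [n] by deleting some edges. Then for every k ≥ 0 and every subset S ⊆ [n], the number of elements of word length k in the right-angled Coxeter group W_{G'} (with respect to the standard generators) is at least the number of elements of word length k in W_G. Consequently the radius of convergence of the growth series of W_{G'} is at most that of W_G. -/
/-- The defining relators of the right-angled Coxeter group of a graph `G` on `[n]`:
`s_i² = 1` for each `i`, and `(s_i s_j)² = 1` whenever `{i,j}` is an edge of `G`. -/
def racgRels {n : ℕ} (G : SimpleGraph (Fin n)) : Set (FreeGroup (Fin n)) :=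
  {r | (∃ i, r = (FreeGroup.of i) ^ 2) ∨
    ∃ i j, G.Adj i j ∧ r = (FreeGroup.of i * FreeGroup.of j) ^ 2}

/-- The right-angled Coxeter group `W_G` of a graph `G`. -/
def RACG {n : ℕ} (G : SimpleGraph (Fin n)) : Type := PresentedGroup (racgRels G)

instance {n : ℕ} (G : SimpleGraph (Fin n)) : Group (RACG G) := by
  unfold RACG; infer_instance

/-- The standard generator `s_i` of `W_G`. -/
def racgGen {n : ℕ} (G : SimpleGraph (Fin n)) (i : Fin n) : RACG G :=
  PresentedGroup.of i

/-- The set of elements of `W_G` that have word length exactly `k` with respect to the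
standard generators, using only letters from the subset `S ⊆ [n]`: elements `w`
expressible as a product of `k` generators with indices in `S`, and not expressible
as any shorter such product. -/
def lengthKElems {n : ℕ} (G : SimpleGraph (Fin n)) (S : Finset (Fin n)) (k : ℕ) :
    Set (RACG G) :=
  {w | (∃ l : List (Fin n), (∀ i ∈ l, i ∈ S) ∧ l.length = k ∧
          (l.map (racgGen G)).prod = w) ∧
       ∀ l : List (Fin n), (∀ i ∈ l, i ∈ S) → (l.map (racgGen G)).prod = w →
          k ≤ l.length}

/-- The natural surjection `W_{G'} → W_G` when `G' ≤ G`. -/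
def racgMap {n : ℕ} (G G' : SimpleGraph (Fin n)) (hdel : G' ≤ G) :
    RACG G' →* RACG G :=
  QuotientGroup.map _ _ (MonoidHom.id _) (by
    refine Subgroup.normalClosure_le_normal ?_
    intro r hr
    apply Subgroup.subset_normalClosure
    rcases hr with ⟨i, rfl⟩ | ⟨i, j, hij, rfl⟩
    · exact Or.inl ⟨i, rfl⟩
    · exact Or.inr ⟨i, j, hdel hij, rfl⟩)

lemma finite_lengthK {n : ℕ} (G : SimpleGraph (Fin n)) (S : Finset (Fin n)) (k : ℕ) :
    (lengthKElems G S k).Finite := by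
  apply Set.Finite.subset (Set.Finite.image (fun l => (l.map (racgGen G)).prod)
    (List.finite_length_eq (Fin n) k))
  rintro w ⟨⟨l, _, hlen, hprod⟩, _⟩
  exact ⟨l, hlen, hprod⟩

/-- Suppose `G'` is obtained from `G` (both graphs on `[n]`) by deleting
some edges, i.e. `G' ≤ G`.  Then for every `k ≥ 0` and every `S ⊆ [n]`, the number of
elements of word length `k` (with letters in `S`) in `W_{G'}` is at least the
corresponding number for `W_G`.  Consequently, the radius of convergence of the growth
series of `W_{G'}` is at most that of `W_G`: for every `t ≥ 0`, if
`∑_k a_k(G') t^k` converges then so does `∑_k a_k(G) t^k`. -/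
theorem stmt5 {n : ℕ} (G G' : SimpleGraph (Fin n)) (hdel : G' ≤ G) :
    (∀ (k : ℕ) (S : Finset (Fin n)),
        Nat.card (lengthKElems G S k) ≤ Nat.card (lengthKElems G' S k)) ∧
      ∀ t : ℝ, 0 ≤ t →
        Summable (fun k : ℕ => (Nat.card (lengthKElems G' Finset.univ k) : ℝ) * t ^ k) →
        Summable (fun k : ℕ => (Nat.card (lengthKElems G Finset.univ k) : ℝ) * t ^ k) := by
  have hmain : ∀ (k : ℕ) (S : Finset (Fin n)),
      Nat.card (lengthKElems G S k) ≤ Nat.card (lengthKElems G' S k) := by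
    intro k S
    have hfin : Finite (lengthKElems G' S k) := (finite_lengthK G' S k).to_subtype
    have key : ∀ w : lengthKElems G S k, ∃ w' : lengthKElems G' S k,
        racgMap G G' hdel w'.1 = w.1 := by
      rintro ⟨w, ⟨l, hS, hlen, hprod⟩, hmin⟩
      have heq : (racgMap G G' hdel) ∘ racgGen G' = racgGen G := rfl
      refine ⟨⟨(l.map (racgGen G')).prod, ⟨l, hS, hlen, rfl⟩, ?_⟩, ?_⟩
      · intro l' hS' hprod'
        apply hmin l' hS'
        have := congrArg (racgMap G G' hdel) hprod'
        rw [map_list_prod, map_list_prod] at this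
        simp only [List.map_map] at this
        rw [heq] at this
        rw [← hprod]
        simpa [List.map_map, heq] using this
      · show racgMap G G' hdel (l.map (racgGen G')).prod = w
        rw [map_list_prod]
        simp only [List.map_map]
        rw [heq, hprod]
    choose f hf using key
    have hinj : Function.Injective f := by
      intro a b hab
      ext
      rw [← hf a, ← hf b, hab]
    exact Nat.card_le_card_of_injective f hinj
  refine ⟨hmain, ?_⟩
  intro t ht hsum
  apply Summable.of_nonneg_of_le (fun k => by positivity) (fun k => ?_) hsum
  exact mul_le_mul_of_nonneg_right (by exact_mod_cast hmain k Finset.univ) (by positivity)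
end

section
/- For t_1,...,t_n ∈ [0,∞) with Σ_{i=1}^n t_i/(1+t_i) < 1, the series Σ_{k≥0} a_k(t), where a_k(t) = Σ over words of length k in the free product (Z/2)^{*n} of the product of the t_i over the letters used (i.e., the multivariable growth series of the free product of n copies of Z/2), converges, and its sum equals 1/(1 - Σ_{i=1}^n t_i/(1+t_i)). -/
/-- Reduced words in the free product `(ℤ/2)^{*n}`: sequences of letters from `[n]`
with no two consecutive letters equal.  These correspond bijectively to group
elements. -/
def ReducedWord (n : ℕ) : Type := {l : List (Fin n) // l.Chain' (· ≠ ·)}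

/-- The monomial `t_{i_1} ⋯ t_{i_k}` attached to a reduced word `s_{i_1} ⋯ s_{i_k}`. -/
def wordMonomial {n : ℕ} (t : Fin n → ℝ) (l : ReducedWord n) : ℝ :=
  (l.1.map t).prod

open scoped ENNReal NNReal

namespace Stmt7Aux
variable {n : ℕ}

/-- Decompose a `tsum` over lists by the head. -/
lemma tsum_cons_decomp (G : List (Fin n) → ℝ≥0∞) :
    ∑' l, G l = G [] + ∑ i : Fin n, ∑' l, G (i :: l) := by
  classical
  rw [ENNReal.tsum_eq_add_tsum_ite ([] : List (Fin n))]
  congr 1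
  rw [← tsum_fintype (L := .unconditional _), ← ENNReal.tsum_prod (f := fun i l => G (i :: l))]
  have hinj : Function.Injective (fun p : Fin n × List (Fin n) => p.1 :: p.2) := by
    rintro ⟨a, l⟩ ⟨b, m⟩ h
    simp only [List.cons.injEq] at h
    simp [h.1, h.2]
  have hs : Function.support (fun l : List (Fin n) => if l = [] then 0 else G l)
      ⊆ Set.range (fun p : Fin n × List (Fin n) => p.1 :: p.2) := by
    intro l hl
    rcases l with _ | ⟨a, l⟩
    · simp [Function.mem_support] at hl
    · exact ⟨(a, l), rfl⟩
  have := hinj.tsum_eq (f := fun l => if l = [] then 0 else G l) hs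
  have h2 : ∑' (c : Fin n × List (Fin n)), (fun l => if l = [] then 0 else G l) (c.1 :: c.2)
      = ∑' (p : Fin n × List (Fin n)), G (p.1 :: p.2) := tsum_congr fun p => by simp
  convert this.symm.trans h2 using 2 with l
  funext l
  congr


open Classical in
/-- weight of a list: monomial if reduced, else 0 -/
noncomputable def FF (τ : Fin n → ℝ≥0∞) (l : List (Fin n)) : ℝ≥0∞ :=
  if l.Chain' (· ≠ ·) then (l.map τ).prod else 0

noncomputable def DD (τ : Fin n → ℝ≥0∞) (i : Fin n) (l : List (Fin n)) : ℝ≥0∞ :=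
  if (∀ y ∈ l.head?, i ≠ y) then FF τ l else 0

variable (τ : Fin n → ℝ≥0∞)

@[simp] lemma FF_nil : FF τ [] = 1 := by simp [FF, List.Chain']

lemma FF_cons (i : Fin n) (l : List (Fin n)) : FF τ (i :: l) = τ i * DD τ i l := by
  simp only [FF, DD, List.Chain', List.isChain_cons, List.map_cons, List.prod_cons]
  by_cases h1 : (∀ y ∈ l.head?, i ≠ y) <;> by_cases h2 : l.IsChain (· ≠ ·) <;>
    simp [h1, h2]

@[simp] lemma DD_nil (i : Fin n) : DD τ i [] = 1 := by simp [DD]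

lemma DD_cons (i j : Fin n) (l : List (Fin n)) :
    DD τ i (j :: l) = if i = j then 0 else FF τ (j :: l) := by
  by_cases h : i = j <;> simp [DD, h]

noncomputable def FFk (τ : Fin n → ℝ≥0∞) (k : ℕ) (l : List (Fin n)) : ℝ≥0∞ :=
  if l.length ≤ k then FF τ l else 0

noncomputable def BB (τ : Fin n → ℝ≥0∞) (i : Fin n) : ℝ≥0∞ := ∑' l, FF τ (i :: l)

noncomputable def BBk (τ : Fin n → ℝ≥0∞) (k : ℕ) (i : Fin n) : ℝ≥0∞ :=
  ∑' l, FFk τ k (i :: l)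

lemma BB_eq (i : Fin n) :
    BB τ i = τ i * (1 + ∑ j : Fin n, if i = j then 0 else BB τ j) := by
  have h1 : BB τ i = τ i * ∑' l, DD τ i l := by
    rw [BB, ← ENNReal.tsum_mul_left]
    exact tsum_congr fun l => FF_cons τ i l
  rw [h1, tsum_cons_decomp (DD τ i), DD_nil]
  congr 2
  refine Finset.sum_congr rfl fun j _ => ?_
  by_cases h : i = j
  · simp [h, DD_cons]
  · simp only [DD_cons, h, if_false]
    rw [BB]

lemma BBk_zero (i : Fin n) : BBk τ 0 i = 0 := by
  rw [BBk]
  have : ∀ l : List (Fin n), FFk τ 0 (i :: l) = 0 := fun l => by simp [FFk]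
  simp only [this, tsum_zero]

lemma BBk_succ (k : ℕ) (i : Fin n) :
    BBk τ (k + 1) i = τ i * (1 + ∑ j : Fin n, if i = j then 0 else BBk τ k j) := by
  have hcons : ∀ l : List (Fin n),
      FFk τ (k + 1) (i :: l) = τ i * (if l.length ≤ k then DD τ i l else 0) := by
    intro l
    simp only [FFk, List.length_cons, Nat.add_le_add_iff_right, FF_cons]
    by_cases h : l.length ≤ k <;> simp [h]
  have h1 : BBk τ (k + 1) i
      = τ i * ∑' l, (if l.length ≤ k then DD τ i l else 0) := by
    rw [BBk, ← ENNReal.tsum_mul_left]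
    exact tsum_congr hcons
  rw [h1, tsum_cons_decomp (fun l => if l.length ≤ k then DD τ i l else 0)]
  simp only [List.length_nil, Nat.zero_le, if_true, DD_nil]
  congr 2
  refine Finset.sum_congr rfl fun j _ => ?_
  by_cases h : i = j
  · simp [h, DD_cons]
  · simp only [DD_cons, h, if_false]
    exact tsum_congr fun l => by rw [FFk]


lemma sum_ite_split (i : Fin n) (f : Fin n → ℝ) :
    ∑ j, (if i = j then 0 else f j) = (∑ j, f j) - f i := by
  have h : ∀ j : Fin n, (if i = j then 0 else f j) = f j - (if i = j then f j else 0) := by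
    intro j; by_cases h : i = j <;> simp [h]
  rw [Finset.sum_congr rfl fun j _ => h j, Finset.sum_sub_distrib, Fintype.sum_ite_eq]

lemma key_real_identity (t : Fin n → ℝ) (ht0 : ∀ i, 0 ≤ t i)
    (ht : ∑ i, t i / (1 + t i) < 1) (i : Fin n) :
    t i * (1 + ∑ j, (if i = j then 0 else
        t j / (1 + t j) * (1 / (1 - ∑ j', t j' / (1 + t j'))))) =
      t i / (1 + t i) * (1 / (1 - ∑ j', t j' / (1 + t j'))) := by
  have h1t : (0:ℝ) < 1 + t i := by have := ht0 i; linarith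
  have hS1 : (0:ℝ) < 1 - ∑ j', t j' / (1 + t j') := by linarith
  rw [sum_ite_split i (fun j => t j / (1 + t j) * (1 / (1 - ∑ j', t j' / (1 + t j'))))]
  rw [← Finset.sum_mul]
  field_simp
  ring

lemma BBk_le (t : Fin n → ℝ) (ht0 : ∀ i, 0 ≤ t i)
    (ht : ∑ i, t i / (1 + t i) < 1) :
    ∀ k i, BBk (fun i => ENNReal.ofReal (t i)) k i
      ≤ ENNReal.ofReal (t i / (1 + t i) * (1 / (1 - ∑ j', t j' / (1 + t j')))) := by
  have h1t : ∀ i, (0:ℝ) < 1 + t i := fun i => by have := ht0 i; linarith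
  have hu0 : ∀ i, (0:ℝ) ≤ t i / (1 + t i) := fun i => div_nonneg (ht0 i) (h1t i).le
  have hS1 : (0:ℝ) < 1 - ∑ j', t j' / (1 + t j') := by linarith
  have hC0 : (0:ℝ) ≤ 1 / (1 - ∑ j', t j' / (1 + t j')) := by positivity
  intro k
  induction k with
  | zero => intro i; rw [BBk_zero]; exact zero_le
  | succ k IH =>
    intro i
    rw [BBk_succ]
    calc ENNReal.ofReal (t i) * (1 + ∑ j, if i = j then 0 else
            BBk (fun i => ENNReal.ofReal (t i)) k j)
        ≤ ENNReal.ofReal (t i) * (1 + ∑ j, if i = j then 0 else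
            ENNReal.ofReal (t j / (1 + t j) * (1 / (1 - ∑ j', t j' / (1 + t j'))))) := by
          refine mul_le_mul_right (add_le_add_right (Finset.sum_le_sum fun j _ => ?_) 1) _
          by_cases h : i = j
          · simp [h]
          · simp only [h, if_false]; exact IH j
      _ = ENNReal.ofReal (t i * (1 + ∑ j, if i = j then 0 else
            t j / (1 + t j) * (1 / (1 - ∑ j', t j' / (1 + t j'))))) := by
          have h1 : ∀ j : Fin n, (if i = j then 0 else
              ENNReal.ofReal (t j / (1 + t j) * (1 / (1 - ∑ j', t j' / (1 + t j')))))
              = ENNReal.ofReal (if i = j then 0 else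
                t j / (1 + t j) * (1 / (1 - ∑ j', t j' / (1 + t j')))) := by
            intro j; by_cases h : i = j <;> simp [h]
          rw [Finset.sum_congr rfl fun j _ => h1 j,
            ← ENNReal.ofReal_sum_of_nonneg (fun j _ => by
              by_cases h : i = j
              · simp [h]
              · simp only [h, if_false]; exact mul_nonneg (hu0 j) hC0),
            ← ENNReal.ofReal_one, ← ENNReal.ofReal_add zero_le_one
              (Finset.sum_nonneg fun j _ => by
                by_cases h : i = j
                · simp [h]
                · simp only [h, if_false]; exact mul_nonneg (hu0 j) hC0),
            ← ENNReal.ofReal_mul (ht0 i)]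
      _ ≤ _ := le_of_eq (by rw [key_real_identity t ht0 ht i])

lemma BB_le (t : Fin n → ℝ) (ht0 : ∀ i, 0 ≤ t i)
    (ht : ∑ i, t i / (1 + t i) < 1) (i : Fin n) :
    BB (fun i => ENNReal.ofReal (t i)) i
      ≤ ENNReal.ofReal (t i / (1 + t i) * (1 / (1 - ∑ j', t j' / (1 + t j')))) := by
  rw [BB, ENNReal.tsum_eq_iSup_sum]
  refine iSup_le fun s => ?_
  set τ : Fin n → ℝ≥0∞ := fun i => ENNReal.ofReal (t i) with hτ
  set k := s.sup List.length with hk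
  have h1 : ∀ l ∈ s, FF τ (i :: l) = FFk τ (k + 1) (i :: l) := by
    intro l hl
    rw [FFk, if_pos]
    simp only [List.length_cons]
    exact Nat.add_le_add_right (Finset.le_sup hl) 1
  calc ∑ l ∈ s, FF τ (i :: l) = ∑ l ∈ s, FFk τ (k + 1) (i :: l) :=
        Finset.sum_congr rfl h1
    _ ≤ ∑' l, FFk τ (k + 1) (i :: l) := ENNReal.sum_le_tsum s
    _ = BBk τ (k + 1) i := rfl
    _ ≤ _ := BBk_le t ht0 ht (k + 1) i

lemma coe_list_prod_real (l : List (Fin n)) (f : Fin n → ℝ≥0) :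
    (((l.map f).prod : ℝ≥0) : ℝ) = (l.map fun x => (f x : ℝ)).prod := by
  induction l with
  | nil => simp
  | cons a l ih => simp [ih]

lemma coe_list_prod_ennreal (l : List (Fin n)) (f : Fin n → ℝ≥0) :
    (((l.map f).prod : ℝ≥0) : ℝ≥0∞) = (l.map fun x => ((f x : ℝ≥0) : ℝ≥0∞)).prod := by
  induction l with
  | nil => simp
  | cons a l ih => simp [ih]

end Stmt7Aux

open Stmt7Aux in
/-- For `t_1, …, t_n ∈ [0,∞)` with `∑ t_i/(1+t_i) < 1`, the multivariable
growth series of the free product of `n` copies of `ℤ/2` — the sum over all group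
elements (i.e. over all reduced words) of the product of the `t_i` over the letters
used — converges, and its sum equals `1/(1 − ∑_{i=1}^n t_i/(1+t_i))`. -/
theorem stmt7 (n : ℕ) (t : Fin n → ℝ) (ht0 : ∀ i, 0 ≤ t i)
    (ht : ∑ i, t i / (1 + t i) < 1) :
    Summable (wordMonomial t) ∧
      ∑' l : ReducedWord n, wordMonomial t l = 1 / (1 - ∑ i, t i / (1 + t i)) := by
  classical
  have h1t : ∀ i, (0:ℝ) < 1 + t i := fun i => by have := ht0 i; linarith
  have hS1 : (0:ℝ) < 1 - ∑ j', t j' / (1 + t j') := by linarith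
  set τ : Fin n → ℝ≥0∞ := fun i => ENNReal.ofReal (t i) with hτ
  have hBBtop : ∀ i, BB τ i ≠ ⊤ := fun i =>
    ne_top_of_le_ne_top ENNReal.ofReal_ne_top (BB_le t ht0 ht i)
  have hsumBBtop : (∑ i, BB τ i) ≠ ⊤ := ENNReal.sum_ne_top.2 fun i _ => hBBtop i
  have hA : (∑' l : List (Fin n), FF τ l) = 1 + ∑ i, BB τ i := by
    rw [tsum_cons_decomp (FF τ), FF_nil]
    rfl
  have hAtop : (∑' l : List (Fin n), FF τ l) ≠ ⊤ := by
    rw [hA]; exact ENNReal.add_ne_top.2 ⟨ENNReal.one_ne_top, hsumBBtop⟩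
  set a : ℝ := (∑' l : List (Fin n), FF τ l).toReal with ha_def
  set b : Fin n → ℝ := fun i => (BB τ i).toReal with hb_def
  have ha_eq : a = 1 + ∑ i, b i := by
    rw [ha_def, hA, ENNReal.toReal_add ENNReal.one_ne_top hsumBBtop, ENNReal.toReal_one,
      ENNReal.toReal_sum (fun i _ => hBBtop i)]
  have hb_eq : ∀ i, b i = t i * (1 + ((∑ j, b j) - b i)) := by
    intro i
    have h3 : ∀ j : Fin n, (if i = j then 0 else BB τ j) ≠ ⊤ := fun j => by
      by_cases h : i = j <;> simp [h, hBBtop j]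
    have h2 := congrArg ENNReal.toReal (BB_eq τ i)
    rw [ENNReal.toReal_mul,
      ENNReal.toReal_add ENNReal.one_ne_top (ENNReal.sum_ne_top.2 fun j _ => h3 j),
      ENNReal.toReal_one, ENNReal.toReal_sum (fun j _ => h3 j)] at h2
    have h4 : ∀ j : Fin n, (if i = j then 0 else BB τ j).toReal = if i = j then 0 else b j := by
      intro j; by_cases h : i = j <;> simp [h, hb_def]
    rw [Finset.sum_congr rfl fun j _ => h4 j, sum_ite_split i b] at h2
    have h5 : (τ i).toReal = t i := by rw [hτ]; exact ENNReal.toReal_ofReal (ht0 i)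
    rw [h5] at h2
    exact h2
  have hb_u : ∀ i, b i = t i / (1 + t i) * a := by
    intro i
    have h6 : b i = t i * (a - b i) := by rw [ha_eq]; linear_combination hb_eq i
    have h7 : b i * (1 + t i) = t i * a := by linear_combination h6
    rw [div_mul_eq_mul_div, eq_div_iff (ne_of_gt (h1t i))]
    linear_combination h7
  have ha_val : a = 1 / (1 - ∑ j', t j' / (1 + t j')) := by
    have h7 : a = 1 + (∑ i, t i / (1 + t i)) * a := by
      conv_lhs => rw [ha_eq]
      rw [Finset.sum_congr rfl fun i _ => hb_u i, ← Finset.sum_mul]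
    rw [eq_div_iff (ne_of_gt hS1)]
    linear_combination h7
  set g : ReducedWord n → ℝ≥0 := fun r => (r.1.map (fun i => (t i).toNNReal)).prod with hg
  have hg_coe : ∀ r : ReducedWord n, (g r : ℝ) = wordMonomial t r := by
    intro r
    rw [hg, wordMonomial, coe_list_prod_real]
    congr 1
    exact List.map_congr_left fun i _ => Real.coe_toNNReal _ (ht0 i)
  have hFg : ∀ r : ReducedWord n, ((g r : ℝ≥0) : ℝ≥0∞) = FF τ r.1 := by
    intro r
    rw [hg, FF, if_pos r.2, coe_list_prod_ennreal, hτ]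
    rfl
  have htsum_g : (∑' r : ReducedWord n, ((g r : ℝ≥0) : ℝ≥0∞)) = ∑' l : List (Fin n), FF τ l := by
    have hsupp : Function.support (FF τ) ⊆ Set.range (fun r : ReducedWord n => r.1) := by
      intro l hl
      have hc : l.Chain' (· ≠ ·) := by
        by_contra h; exact hl (by simp [FF, h])
      exact ⟨⟨l, hc⟩, rfl⟩
    have hinj : Function.Injective (fun r : ReducedWord n => r.1) := fun r s h => Subtype.ext h
    rw [← hinj.tsum_eq hsupp]
    exact tsum_congr fun r => hFg r
  have hAne : (∑' r : ReducedWord n, ((g r : ℝ≥0) : ℝ≥0∞)) ≠ ⊤ := by rw [htsum_g]; exact hAtop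
  have hg_sum : Summable g := ENNReal.tsum_coe_ne_top_iff_summable.1 hAne
  have hws : Summable (wordMonomial t) := (NNReal.summable_coe.2 hg_sum).congr hg_coe
  refine ⟨hws, ?_⟩
  have h9 : (∑' r : ReducedWord n, wordMonomial t r) = ((∑' r, g r : ℝ≥0) : ℝ) := by
    rw [NNReal.coe_tsum]; exact tsum_congr fun r => (hg_coe r).symm
  have h10 : ((∑' r, g r : ℝ≥0) : ℝ≥0∞) = ∑' l : List (Fin n), FF τ l := by
    rw [ENNReal.coe_tsum hg_sum]; exact htsum_g
  have h11 : ((∑' r, g r : ℝ≥0) : ℝ) = a := by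
    rw [ha_def, ← h10, ENNReal.coe_toReal]
  rw [h9, h11, ha_val]
end
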